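/- Let c be a coefficient, let 0 ≤ β < H, and let c₁ ∈ (c_m, c_M] satisfy c(y) ≥ c₁ for a.e. y ∈ (β,H). Let μ > 0 and λ ∈ ℝ with λ < c₁μ², and set ξ₁² := μ² − λ/c₁ > 0. Let u, with flux v, be absolutely continuous on [β,H] and satisfy v(y) = c(y)u'(y) a.e. and v'(y) = (c(y)μ² − λ)u(y) for a.e. y ∈ (β,H), together with u(H) = 0 and v(H) < 0. Then u(y) > 0 for all y ∈ [β,H), and u(β)² ≥ 2 (c_m/c_M) ξ₁² ∫_β^H (σ − β) u(σ)² dσ. -/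

import Mathlib

open MeasureTheory Set Filter Topology

noncomputable section

/-- `u` (with flux `v = c·u'` and weak derivative `g = u'`) is a solution of the reduced
problem `(c u')' + (λ - c μ²) u = 0` on the interval `[a, b]`:
`u` is absolutely continuous with derivative `g ∈ L²`, the flux `v` agrees a.e. with `c·g`,
and `v` is absolutely continuous with derivative `(c μ² - λ)·u`. -/
def IsReducedSolutionOn (a b : ℝ) (c : ℝ → ℝ) (μ lam : ℝ) (u v g : ℝ → ℝ) : Prop :=
  IntervalIntegrable g volume a b ∧
  IntervalIntegrable (fun t => g t ^ 2) volume a b ∧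
  (∀ y ∈ Set.Icc a b, u y = u a + ∫ t in a..y, g t) ∧
  (∀ᵐ y ∂volume.restrict (Set.Ioo a b), v y = c y * g y) ∧
  IntervalIntegrable (fun t => (c t * μ ^ 2 - lam) * u t) volume a b ∧
  (∀ y ∈ Set.Icc a b, v y = v a + ∫ t in a..y, (c t * μ ^ 2 - lam) * u t)

/-- A coefficient on `[0, H]`: measurable and bounded between `cm` and `cM`. -/
def IsCoeff (H cm cM : ℝ) (c : ℝ → ℝ) : Prop :=
  Measurable c ∧ ∀ y ∈ Set.Icc (0 : ℝ) H, cm ≤ c y ∧ c y ≤ cM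


/-- Square of a primitive: `∫ g·G = (∫g)²/2`. -/
theorem sq_primitive {g : ℝ → ℝ} {a b : ℝ} (hab : a ≤ b)
    (hg : IntervalIntegrable g volume a b) :
    (∫ t in a..b, g t * ∫ s in a..t, g s) = (∫ t in a..b, g t) ^ 2 / 2 := by
  set ν := volume.restrict (Ioc a b) with hν
  have hgν : Integrable g ν := hg.1
  set G : ℝ → ℝ := fun t => ∫ s in a..t, g s with hG
  set T : ℝ := ∫ t in a..b, g t with hT
  -- integrability of g * G
  have hGc : ContinuousOn G (uIcc a b) :=
    intervalIntegral.continuousOn_primitive_interval' hg left_mem_uIcc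
  have hgG : IntervalIntegrable (fun t => g t * G t) volume a b := hg.mul_continuousOn hGc
  have hgGν : Integrable (fun t => g t * G t) ν := hgG.1
  -- the kernel
  have hs : MeasurableSet {p : ℝ × ℝ | p.2 ≤ p.1} := measurableSet_le measurable_snd measurable_fst
  have hprod : Integrable (fun p : ℝ × ℝ => g p.1 * g p.2) (ν.prod ν) := hgν.mul_prod hgν
  have hF : Integrable (fun p : ℝ × ℝ => if p.2 ≤ p.1 then g p.1 * g p.2 else 0) (ν.prod ν) := by
    have := hprod.indicator hs
    refine this.congr (ae_of_all _ fun p => ?_)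
    by_cases h : p.2 ≤ p.1 <;> simp [Set.indicator_apply, h]
  have hswap := MeasureTheory.integral_integral_swap
    (f := fun t s => if s ≤ t then g t * g s else 0) hF
  -- LHS of swap
  have hL : (∫ t, (∫ s, (if s ≤ t then g t * g s else 0) ∂ν) ∂ν)
      = ∫ t, g t * G t ∂ν := by
    refine setIntegral_congr_fun measurableSet_Ioc fun t ht => ?_
    have h1 : (∫ s, (if s ≤ t then g t * g s else 0) ∂ν)
        = ∫ s in Ioc a b ∩ Iic t, g t * g s := by
      rw [← setIntegral_indicator measurableSet_Iic]
      refine setIntegral_congr_fun measurableSet_Ioc fun s _ => ?_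
      by_cases h : s ≤ t <;> simp [Set.indicator_apply, h]
    rw [h1]
    have h2 : Ioc a b ∩ Iic t = Ioc a t := by
      rw [Set.Ioc_inter_Iic, min_eq_right ht.2]
    rw [h2, MeasureTheory.integral_const_mul, ← intervalIntegral.integral_of_le ht.1.le]
  -- RHS of swap
  have hR : (∫ s, (∫ t, (if s ≤ t then g t * g s else 0) ∂ν) ∂ν)
      = ∫ s, (T - G s) * g s ∂ν := by
    refine setIntegral_congr_fun measurableSet_Ioc fun s hsm => ?_
    have h1 : (∫ t, (if s ≤ t then g t * g s else 0) ∂ν)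
        = ∫ t in Ioc a b ∩ Ici s, g t * g s := by
      rw [← setIntegral_indicator measurableSet_Ici]
      refine setIntegral_congr_fun measurableSet_Ioc fun t _ => ?_
      by_cases h : s ≤ t <;> simp [Set.indicator_apply, h]
    rw [h1]
    have h2 : Ioc a b ∩ Ici s = Icc s b := by
      ext t; simp only [Set.mem_inter_iff, Set.mem_Ioc, Set.mem_Ici, Set.mem_Icc]
      constructor
      · rintro ⟨⟨_, h2⟩, h3⟩; exact ⟨h3, h2⟩
      · rintro ⟨h1', h2⟩; exact ⟨⟨lt_of_lt_of_le hsm.1 h1', h2⟩, h1'⟩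
    rw [h2, setIntegral_congr_set (Ioc_ae_eq_Icc).symm, MeasureTheory.integral_mul_const]
    congr 1
    have hadj := intervalIntegral.integral_add_adjacent_intervals
      (hg.mono_set (by rw [Set.uIcc_of_le hsm.1.le, Set.uIcc_of_le hab]; exact Set.Icc_subset_Icc le_rfl hsm.2))
      (hg.mono_set (by rw [Set.uIcc_of_le hsm.2, Set.uIcc_of_le hab]; exact Set.Icc_subset_Icc hsm.1.le le_rfl))
    have hGs : G s = ∫ x in a..s, g x := rfl
    have hTT : T = ∫ x in a..b, g x := rfl
    rw [← intervalIntegral.integral_of_le hsm.2, hGs, hTT]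
    linarith [hadj]
  rw [hL, hR] at hswap
  have hsplit : (∫ s, (T - G s) * g s ∂ν) = T * T - ∫ s, g s * G s ∂ν := by
    have h1 : (fun s => (T - G s) * g s) = fun s => T * g s - g s * G s := by
      funext s; ring
    rw [h1, integral_sub (hgν.const_mul T) hgGν, MeasureTheory.integral_const_mul]
    rw [intervalIntegral.integral_of_le hab] at hT
    rw [← hT]
  rw [hsplit] at hswap
  rw [intervalIntegral.integral_of_le hab]
  have : (∫ t, g t * G t ∂ν) = T * T / 2 := by linarith
  rw [show (∫ t in Ioc a b, g t * G t) = ∫ t, g t * G t ∂ν from rfl, this]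
  ring

/-- Integration by parts for the triangle: `∫_a^b (∫_y^b f) dy = ∫ (t-a) f(t) dt`. -/
theorem parts_tri {f : ℝ → ℝ} (hf : Continuous f) {a b : ℝ} (hab : a ≤ b) :
    (∫ y in a..b, (∫ t in y..b, f t)) = ∫ t in a..b, (t - a) * f t := by
  set A : ℝ → ℝ := fun y => ∫ t in y..b, f t with hA
  have hAd : ∀ y : ℝ, HasDerivAt A (-(f y)) y := by
    intro y
    have h1 : HasDerivAt (fun u => ∫ t in b..u, f t) (f y) y :=
      intervalIntegral.integral_hasDerivAt_right (hf.intervalIntegrable b y)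
        (hf.stronglyMeasurable.stronglyMeasurableAtFilter) hf.continuousAt
    have h2 : A = fun u => -(∫ t in b..u, f t) := by
      funext u
      show (∫ t in u..b, f t) = -(∫ t in b..u, f t)
      rw [intervalIntegral.integral_symm u b, neg_neg]
    rw [h2]; exact h1.neg
  have hAc : Continuous A := by
    apply continuous_iff_continuousAt.2 fun y => (hAd y).continuousAt
  have hFd : ∀ y ∈ uIcc a b, HasDerivAt (fun y => (y - a) * A y) (A y + (y - a) * (-(f y))) y := by
    intro y _
    have := ((hasDerivAt_id y).sub_const a).mul (hAd y)
    rw [one_mul] at this; exact this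
  have hint : IntervalIntegrable (fun y => A y + (y - a) * (-(f y))) volume a b :=
    (hAc.add ((continuous_id.sub continuous_const).mul hf.neg)).intervalIntegrable a b
  have hFTC := intervalIntegral.integral_eq_sub_of_hasDerivAt hFd hint
  have hAb : A b = 0 := by simp [hA]
  rw [hAb] at hFTC
  simp only [mul_zero, sub_self, zero_mul, sub_zero, zero_sub, mul_neg] at hFTC
  have hsplit : (∫ y in a..b, (A y + -((y - a) * f y)))
      = (∫ y in a..b, A y) - ∫ y in a..b, (y - a) * f y := by
    have := intervalIntegral.integral_sub
      (hAc.intervalIntegrable a b : IntervalIntegrable A volume a b)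
      ((((continuous_id.sub continuous_const).mul hf).intervalIntegrable a b :
        IntervalIntegrable (fun y => (y - a) * f y) volume a b))
    simpa [sub_eq_add_neg] using this
  rw [hsplit] at hFTC
  have : (∫ y in a..b, A y) = ∫ y in a..b, (y - a) * f y := by linarith
  exact this

set_option maxHeartbeats 2000000 in
/-- positivity and the lower pointwise bound at `β` for a solution on `[β, H]`
with `u(H) = 0`, `(cu')(H) < 0`, below the well threshold `c₁`. -/
theorem stmt1 (cm cM H : ℝ) (hcm : 0 < cm) (hcmM : cm < cM) (hH : 0 < H)
    (c : ℝ → ℝ) (hc : IsCoeff H cm cM c)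
    (β c₁ : ℝ) (hβ0 : 0 ≤ β) (hβH : β < H)
    (hc₁ : cm < c₁) (hc₁' : c₁ ≤ cM)
    (hwell : ∀ᵐ y ∂volume.restrict (Set.Ioo β H), c₁ ≤ c y)
    (μ lam : ℝ) (hμ : 0 < μ) (hlam : lam < c₁ * μ ^ 2)
    (u v g : ℝ → ℝ) (hsol : IsReducedSolutionOn β H c μ lam u v g)
    (huH : u H = 0) (hvH : v H < 0) :
    (∀ y ∈ Set.Ico β H, 0 < u y) ∧
    2 * (cm / cM) * (μ ^ 2 - lam / c₁) * (∫ σ in β..H, (σ - β) * u σ ^ 2) ≤ u β ^ 2 := by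
  obtain ⟨hgi, hg2i, hu, hvg, hwi, hv⟩ := hsol
  have hβH' : β ≤ H := hβH.le
  have hc₁0 : 0 < c₁ := hcm.trans hc₁
  have hcM0 : 0 < cM := hcm.trans hcmM
  set ξ : ℝ := μ ^ 2 - lam / c₁ with hξdef
  have hξpos : 0 < ξ := by
    have : lam / c₁ < μ ^ 2 := (div_lt_iff₀ hc₁0).2 (by linarith)
    rw [hξdef]; linarith
  have hc₁ξ : c₁ * ξ = c₁ * μ ^ 2 - lam := by
    rw [hξdef]; field_simp
  -- clamp onto [β, H]
  set π : ℝ → ℝ := fun y => max β (min y H) with hπdef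
  have hπc : Continuous π := continuous_const.max (continuous_id.min continuous_const)
  have hπmem : ∀ y, π y ∈ Set.Icc β H := fun y =>
    ⟨le_max_left _ _, max_le hβH' (min_le_right _ _)⟩
  have hπid : ∀ y ∈ Set.Icc β H, π y = y := fun y hy => by
    show max β (min y H) = y
    rw [min_eq_left hy.2, max_eq_right hy.1]
  -- continuous version of u
  set U : ℝ → ℝ := fun y => u β + ∫ t in β..y, g t with hUdef
  have hUc : ContinuousOn U (Set.Icc β H) := by
    have h1 : ContinuousOn (fun y => ∫ t in β..y, g t) (Set.uIcc β H) :=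
      intervalIntegral.continuousOn_primitive_interval' hgi left_mem_uIcc
    rw [Set.uIcc_of_le hβH'] at h1
    exact continuousOn_const.add h1
  set uc : ℝ → ℝ := U ∘ π with hucdef
  have huc : Continuous uc := hUc.comp_continuous hπc hπmem
  have hucu : ∀ y ∈ Set.Icc β H, uc y = u y := fun y hy => by
    show U (π y) = u y
    rw [hπid y hy]
    exact (hu y hy).symm
  -- difference formulas
  have hgsub : ∀ y ∈ Set.Icc β H, ∀ z ∈ Set.Icc β H, y ≤ z →
      IntervalIntegrable g volume y z := fun y hy z hz hyz =>
    hgi.mono_set (by rw [Set.uIcc_of_le hyz, Set.uIcc_of_le hβH']; exact Set.Icc_subset_Icc hy.1 hz.2)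
  set W : ℝ → ℝ := fun t => (c t * μ ^ 2 - lam) * u t with hWdef
  have hWsub : ∀ y ∈ Set.Icc β H, ∀ z ∈ Set.Icc β H, y ≤ z →
      IntervalIntegrable W volume y z := fun y hy z hz hyz =>
    hwi.mono_set (by rw [Set.uIcc_of_le hyz, Set.uIcc_of_le hβH']; exact Set.Icc_subset_Icc hy.1 hz.2)
  have hudiff : ∀ y ∈ Set.Icc β H, ∀ z ∈ Set.Icc β H, y ≤ z →
      u z - u y = ∫ t in y..z, g t := by
    intro y hy z hz hyz
    have hadj := intervalIntegral.integral_add_adjacent_intervals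
      (hgsub β ⟨le_rfl, hβH'⟩ y hy hy.1) (hgsub y hy z hz hyz)
    rw [hu y hy, hu z hz]
    linarith [hadj]
  have hvdiff : ∀ y ∈ Set.Icc β H, ∀ z ∈ Set.Icc β H, y ≤ z →
      v z - v y = ∫ t in y..z, W t := by
    intro y hy z hz hyz
    have hadj := intervalIntegral.integral_add_adjacent_intervals
      (hWsub β ⟨le_rfl, hβH'⟩ y hy hy.1) (hWsub y hy z hz hyz)
    rw [hv y hy, hv z hz]
    linarith [hadj]
  -- continuity of v
  have hVc : ContinuousOn v (Set.Icc β H) := by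
    have h1 : ContinuousOn (fun y => v β + ∫ t in β..y, W t) (Set.uIcc β H) :=
      continuousOn_const.add
        (intervalIntegral.continuousOn_primitive_interval' hwi left_mem_uIcc)
    rw [Set.uIcc_of_le hβH'] at h1
    exact h1.congr fun y hy => hv y hy
  -- master a.e. facts
  have haec : ∀ᵐ t ∂volume.restrict (Set.Ioo β H), cm ≤ c t ∧ c t ≤ cM :=
    (ae_restrict_iff' measurableSet_Ioo).2
      (ae_of_all _ fun t ht => hc.2 t ⟨hβ0.trans ht.1.le, ht.2.le⟩)
  have hmaster : ∀ᵐ t ∂volume.restrict (Set.Ioo β H),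
      v t = c t * g t ∧ (cm ≤ c t ∧ c t ≤ cM) ∧ c₁ ≤ c t := hvg.and (haec.and hwell)
  -- core lower bound
  have hB : ∀ z ∈ Set.Ico β H, ∀ K : ℝ, K ≤ 0 →
      (∀ t ∈ Set.Icc z H, v t ≤ K) → -K / cM * (H - z) ≤ u z := by
    intro z hz K hK hvK
    have hzmem : z ∈ Set.Icc β H := ⟨hz.1, hz.2.le⟩
    have hgz : IntervalIntegrable g volume z H := hgsub z hzmem H ⟨hβH', le_rfl⟩ hz.2.le
    have hdiff := hudiff z hzmem H ⟨hβH', le_rfl⟩ hz.2.le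
    rw [huH] at hdiff
    have hae : g ≤ᵐ[volume.restrict (Set.Icc z H)] fun _ => K / cM := by
      rw [← Measure.restrict_congr_set Ioo_ae_eq_Icc]
      refine ((ae_restrict_of_ae_restrict_of_subset (Set.Ioo_subset_Ioo hz.1 le_rfl) hmaster).and
        ((ae_restrict_iff' measurableSet_Ioo).2
          (ae_of_all _ fun t ht => hvK t ⟨ht.1.le, ht.2.le⟩))).mono ?_
      rintro t ⟨⟨hvgt, ⟨hcmt, hcMt⟩, _⟩, hvt⟩
      have hct : 0 < c t := hcm.trans_le hcmt
      show g t ≤ K / cM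
      rw [le_div_iff₀ hcM0]
      nlinarith
    have hmono := intervalIntegral.integral_mono_ae_restrict hz.2.le hgz
      (intervalIntegrable_const (c := K / cM)) hae
    rw [intervalIntegral.integral_const, smul_eq_mul] at hmono
    have huz : u z = -(∫ t in z..H, g t) := by linarith
    rw [huz]
    have : -K / cM * (H - z) = -((H - z) * (K / cM)) := by ring
    rw [this]
    linarith
  -- a neighbourhood of H where v ≤ v H / 2
  obtain ⟨z₀, hz₀mem, hz₀v⟩ :
      ∃ z₀ ∈ Set.Ico β H, ∀ t ∈ Set.Icc z₀ H, v t ≤ v H / 2 := by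
    have hcw : ContinuousWithinAt v (Set.Icc β H) H := hVc H ⟨hβH', le_rfl⟩
    have hev : ∀ᶠ t in nhdsWithin H (Set.Icc β H), v t < v H / 2 :=
      hcw.eventually_lt_const (by linarith)
    obtain ⟨O, hO, hHO, hsub⟩ := mem_nhdsWithin.1 hev
    obtain ⟨ε, hε, hball⟩ := Metric.isOpen_iff.1 hO H hHO
    refine ⟨max β (H - ε / 2), ⟨le_max_left _ _, max_lt hβH (by linarith)⟩, ?_⟩
    intro t ht
    rcases eq_or_lt_of_le ht.2 with h | h
    · rw [h]; linarith
    · have htO : t ∈ O := by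
        apply hball
        rw [Metric.mem_ball, Real.dist_eq, abs_of_nonpos (by linarith : t - H ≤ 0)]
        have := le_max_right β (H - ε / 2)
        have h2 : H - ε / 2 ≤ t := le_trans this ht.1
        linarith
      have htIcc : t ∈ Set.Icc β H := ⟨le_trans (le_max_left β _) ht.1, ht.2⟩
      exact (hsub ⟨htO, htIcc⟩).le
  have hposz : ∀ z ∈ Set.Ico z₀ H, 0 < u z := by
    intro z hz
    have hz' : z ∈ Set.Ico β H := ⟨hz₀mem.1.trans hz.1, hz.2⟩
    have hb := hB z hz' (v H / 2) (by linarith) fun t ht => hz₀v t ⟨hz.1.trans ht.1, ht.2⟩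
    have hpos : 0 < -(v H / 2) / cM * (H - z) :=
      mul_pos (div_pos (by linarith) hcM0) (by linarith [hz.2])
    calc (0:ℝ) < -(v H / 2) / cM * (H - z) := hpos
      _ ≤ u z := by
        have : -(v H / 2) / cM * (H - z) = -(v H / 2) / cM * (H - z) := rfl
        exact hb
  -- positivity
  have key : ∀ y ∈ Set.Ico β H, 0 < u y := by
    by_contra hcon
    push_neg at hcon
    obtain ⟨y₁, hy₁mem, hy₁⟩ := hcon
    set S : Set ℝ := Set.Icc β z₀ ∩ uc ⁻¹' Set.Iic 0 with hSdef
    have hy₁S : y₁ ∈ S := by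
      constructor
      · refine ⟨hy₁mem.1, ?_⟩
        by_contra hgt
        push_neg at hgt
        exact absurd (hposz y₁ ⟨hgt.le, hy₁mem.2⟩) (not_lt.2 hy₁)
      · show uc y₁ ≤ 0
        rw [hucu y₁ ⟨hy₁mem.1, hy₁mem.2.le⟩]; exact hy₁
    have hSclosed : IsClosed S := isClosed_Icc.inter (isClosed_Iic.preimage huc)
    have hSbdd : BddAbove S := ⟨z₀, fun x hx => hx.1.2⟩
    set y₀ := sSup S with hy₀def
    have hy₀S : y₀ ∈ S := hSclosed.csSup_mem ⟨y₁, hy₁S⟩ hSbdd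
    have hy₀H : y₀ < H := lt_of_le_of_lt hy₀S.1.2 hz₀mem.2
    have hy₀Icc : y₀ ∈ Set.Icc β H := ⟨hy₀S.1.1, hy₀H.le⟩
    have hy₀u : u y₀ ≤ 0 := by rw [← hucu y₀ hy₀Icc]; exact hy₀S.2
    have hupos : ∀ z ∈ Set.Ioo y₀ H, 0 ≤ u z := by
      intro z hz
      rcases lt_or_ge z z₀ with h | h
      · by_contra hneg
        push_neg at hneg
        have hzS : z ∈ S := ⟨⟨hy₀S.1.1.trans hz.1.le, h.le⟩, by
          show uc z ≤ 0
          rw [hucu z ⟨hy₀Icc.1.trans hz.1.le, hz.2.le⟩]; exact hneg.le⟩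
        exact absurd (le_csSup hSbdd hzS) (not_le.2 hz.1)
      · exact (hposz z ⟨h, hz.2⟩).le
    have hvle : ∀ t ∈ Set.Icc y₀ H, v t ≤ v H := by
      intro t ht
      have htIcc : t ∈ Set.Icc β H := ⟨hy₀Icc.1.trans ht.1, ht.2⟩
      have hd := hvdiff t htIcc H ⟨hβH', le_rfl⟩ ht.2
      have hnn : 0 ≤ ∫ s in t..H, W s := by
        apply intervalIntegral.integral_nonneg_of_ae_restrict ht.2
        rw [← Measure.restrict_congr_set Ioo_ae_eq_Icc]
        refine ((ae_restrict_of_ae_restrict_of_subset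
            (Set.Ioo_subset_Ioo (hy₀Icc.1.trans ht.1) le_rfl) hmaster).and
          ((ae_restrict_iff' measurableSet_Ioo).2
            (ae_of_all _ fun s hs => hupos s (Set.Ioo_subset_Ioo ht.1 le_rfl hs)))).mono ?_
        rintro s ⟨⟨_, _, hc₁s⟩, hus⟩
        show (0:ℝ) ≤ W s
        have h0 : 0 ≤ c s * μ ^ 2 - lam := by nlinarith [sq_nonneg μ]
        exact mul_nonneg h0 hus
      linarith
    have hb := hB y₀ ⟨hy₀Icc.1, hy₀H⟩ (v H) hvH.le hvle
    have hpos : 0 < -(v H) / cM * (H - y₀) :=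
      mul_pos (div_pos (by linarith) hcM0) (by linarith)
    linarith
  refine ⟨key, ?_⟩
  -- Part 2
  have hun : ∀ y ∈ Set.Icc β H, 0 ≤ u y := by
    intro y hy
    rcases eq_or_lt_of_le hy.2 with h | h
    · rw [h, huH]
    · exact (key y ⟨hy.1, h⟩).le
  have hucn : ∀ y ∈ Set.Icc β H, 0 ≤ uc y := fun y hy => by
    rw [hucu y hy]; exact hun y hy
  have hvle2 : ∀ t ∈ Set.Icc β H, v t ≤ v H := by
    intro t ht
    have hd := hvdiff t ht H ⟨hβH', le_rfl⟩ ht.2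
    have hnn : 0 ≤ ∫ s in t..H, W s := by
      apply intervalIntegral.integral_nonneg_of_ae_restrict ht.2
      rw [← Measure.restrict_congr_set Ioo_ae_eq_Icc]
      refine ((ae_restrict_of_ae_restrict_of_subset
          (Set.Ioo_subset_Ioo ht.1 le_rfl) hmaster).and
        ((ae_restrict_iff' measurableSet_Ioo).2
          (ae_of_all _ fun s hs => hun s ⟨ht.1.trans hs.1.le, hs.2.le⟩))).mono ?_
      rintro s ⟨⟨_, _, hc₁s⟩, hus⟩
      show (0:ℝ) ≤ W s
      have h0 : 0 ≤ c s * μ ^ 2 - lam := by nlinarith [sq_nonneg μ]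
      exact mul_nonneg h0 hus
    linarith
  -- u (and uc) is nonincreasing
  have hdecu : ∀ y ∈ Set.Icc β H, ∀ z ∈ Set.Icc β H, y ≤ z → uc z ≤ uc y := by
    intro y hy z hz hyz
    rw [hucu y hy, hucu z hz]
    have hd := hudiff y hy z hz hyz
    have hae : g ≤ᵐ[volume.restrict (Set.Icc y z)] fun _ => (0:ℝ) := by
      rw [← Measure.restrict_congr_set Ioo_ae_eq_Icc]
      refine ((ae_restrict_of_ae_restrict_of_subset
          (Set.Ioo_subset_Ioo hy.1 hz.2) hmaster).and
        ((ae_restrict_iff' measurableSet_Ioo).2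
          (ae_of_all _ fun t ht => hvle2 t ⟨hy.1.trans ht.1.le, ht.2.le.trans hz.2⟩))).mono ?_
      rintro t ⟨⟨hvgt, ⟨hcmt, _⟩, _⟩, hvt⟩
      show g t ≤ (0:ℝ)
      by_contra hgt
      push_neg at hgt
      nlinarith [mul_pos (hcm.trans_le hcmt) hgt]
    have hmono := intervalIntegral.integral_mono_ae_restrict hyz (hgsub y hy z hz hyz)
      (intervalIntegrable_const (c := (0:ℝ))) hae
    rw [intervalIntegral.integral_const, smul_eq_mul, mul_zero] at hmono
    linarith
  -- P := ∫_y^H uc²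
  set P : ℝ → ℝ := fun y => ∫ s in y..H, uc s ^ 2 with hPdef
  have hucsq : Continuous fun s => uc s ^ 2 := huc.pow 2
  have hPc : Continuous P := by
    have h1 : Continuous fun y => ∫ s in H..y, uc s ^ 2 :=
      intervalIntegral.continuous_primitive (fun a b => hucsq.intervalIntegrable a b) H
    have h2 : P = fun y => -(∫ s in H..y, uc s ^ 2) := by
      funext y
      rw [hPdef]
      show (∫ s in y..H, uc s ^ 2) = -(∫ s in H..y, uc s ^ 2)
      rw [intervalIntegral.integral_symm y H, neg_neg]
    rw [h2]
    exact h1.neg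
  have hPnn : ∀ y ∈ Set.Icc β H, 0 ≤ P y := fun y hy =>
    intervalIntegral.integral_nonneg hy.2 fun s _ => sq_nonneg _
  -- pointwise key inequality
  have hQ : ∀ y ∈ Set.Icc β H, c₁ * ξ * P y ≤ uc y * (-(v y)) := by
    intro y hy
    have hd := hvdiff y hy H ⟨hβH', le_rfl⟩ hy.2
    have h1 : (∫ t in y..H, W t) ≤ -(v y) := by linarith
    -- ∫ W ≥ (c₁ μ² - lam) ∫ uc
    have hae : (fun s => (c₁ * μ ^ 2 - lam) * uc s) ≤ᵐ[volume.restrict (Set.Icc y H)] W := by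
      rw [← Measure.restrict_congr_set Ioo_ae_eq_Icc]
      refine ((ae_restrict_of_ae_restrict_of_subset
          (Set.Ioo_subset_Ioo hy.1 le_rfl) hmaster).and
        (ae_restrict_mem measurableSet_Ioo)).mono ?_
      rintro s ⟨⟨_, _, hc₁s⟩, hs⟩
      have hsIcc : s ∈ Set.Icc β H := ⟨hy.1.trans hs.1.le, hs.2.le⟩
      show (c₁ * μ ^ 2 - lam) * uc s ≤ W s
      show (c₁ * μ ^ 2 - lam) * uc s ≤ (c s * μ ^ 2 - lam) * u s
      rw [hucu s hsIcc]
      apply mul_le_mul_of_nonneg_right _ (hun s hsIcc)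
      nlinarith [sq_nonneg μ]
    have hWint := hWsub y hy H ⟨hβH', le_rfl⟩ hy.2
    have hucint : IntervalIntegrable (fun s => (c₁ * μ ^ 2 - lam) * uc s) volume y H :=
      ((continuous_const.mul huc).intervalIntegrable y H :
        IntervalIntegrable (fun s => (c₁ * μ ^ 2 - lam) * uc s) volume y H)
    have h2 := intervalIntegral.integral_mono_ae_restrict hy.2 hucint hWint hae
    rw [intervalIntegral.integral_const_mul] at h2
    have h3 : P y ≤ uc y * ∫ s in y..H, uc s := by
      have hptw : ∀ s ∈ Set.Icc y H, uc s ^ 2 ≤ uc y * uc s := by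
        intro s hs
        have hsIcc : s ∈ Set.Icc β H := ⟨hy.1.trans hs.1, hs.2⟩
        have h4 : uc s ≤ uc y := hdecu y hy s hsIcc hs.1
        nlinarith [hucn s hsIcc]
      have hm := intervalIntegral.integral_mono_on hy.2
        ((hucsq.intervalIntegrable y H : IntervalIntegrable (fun s => uc s ^ 2) volume y H))
        (((continuous_const.mul huc).intervalIntegrable y H :
          IntervalIntegrable (fun s => uc y * uc s) volume y H)) hptw
      change (∫ s in y..H, uc s ^ 2) ≤ ∫ s in y..H, uc y * uc s at hm
      rw [intervalIntegral.integral_const_mul] at hm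
      exact hm
    have hucy : 0 ≤ uc y := hucn y hy
    have hcoef : 0 ≤ c₁ * μ ^ 2 - lam := by linarith
    calc c₁ * ξ * P y = (c₁ * μ ^ 2 - lam) * P y := by rw [hc₁ξ]
      _ ≤ (c₁ * μ ^ 2 - lam) * (uc y * ∫ s in y..H, uc s) := mul_le_mul_of_nonneg_left h3 hcoef
      _ = uc y * ((c₁ * μ ^ 2 - lam) * ∫ s in y..H, uc s) := by ring
      _ ≤ uc y * ∫ s in y..H, W s := mul_le_mul_of_nonneg_left h2 hucy
      _ ≤ uc y * (-(v y)) := mul_le_mul_of_nonneg_left h1 hucy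
  -- a.e. version with g
  have hGae : ∀ᵐ t ∂volume.restrict (Set.Ioo β H), c₁ * ξ / cM * P t ≤ uc t * (-(g t)) := by
    refine (hmaster.and (ae_restrict_mem measurableSet_Ioo)).mono ?_
    rintro t ⟨⟨hvgt, ⟨hcmt, hcMt⟩, _⟩, ht⟩
    have htIcc : t ∈ Set.Icc β H := ⟨ht.1.le, ht.2.le⟩
    have hQt := hQ t htIcc
    have hct : 0 < c t := hcm.trans_le hcmt
    have hXv : uc t * (-(v t)) = c t * (uc t * (-(g t))) := by rw [hvgt]; ring
    have hA : 0 ≤ c₁ * ξ * P t :=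
      mul_nonneg (mul_nonneg hc₁0.le hξpos.le) (hPnn t htIcc)
    have hX : 0 ≤ uc t * (-(g t)) := by nlinarith
    rw [div_mul_eq_mul_div, div_le_iff₀ hcM0]
    nlinarith
  -- integrate
  have hint1 : IntervalIntegrable (fun t => uc t * (-(g t))) volume β H := by
    have := (hgi.neg).continuousOn_mul (huc.continuousOn : ContinuousOn uc (Set.uIcc β H))
    exact this
  have hint2 : IntervalIntegrable (fun t => c₁ * ξ / cM * P t) volume β H :=
    ((continuous_const.mul hPc).intervalIntegrable β H :
      IntervalIntegrable (fun t => c₁ * ξ / cM * P t) volume β H)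
  have hIneq := intervalIntegral.integral_mono_ae_restrict hβH' hint2 hint1
    (by rw [← Measure.restrict_congr_set Ioo_ae_eq_Icc]; exact hGae)
  rw [intervalIntegral.integral_const_mul] at hIneq
  have hPint : (∫ y in β..H, ∫ t in y..H, uc t ^ 2) = ∫ t in β..H, (t - β) * uc t ^ 2 :=
    parts_tri hucsq hβH'
  rw [← hPdef] at hPint
  have hEq : (∫ t in β..H, uc t * (-(g t))) = uc β ^ 2 / 2 := by
    have hGc2 : ContinuousOn (fun t => ∫ s in β..t, g s) (Set.uIcc β H) :=
      intervalIntegral.continuousOn_primitive_interval' hgi left_mem_uIcc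
    have hEqOn : Set.EqOn (fun t => uc t * (-(g t)))
        (fun t => u β * (-(g t)) + (∫ s in β..t, g s) * (-(g t))) (Set.uIcc β H) := by
      intro t ht
      rw [Set.uIcc_of_le hβH'] at ht
      have h5 : uc t = u β + ∫ s in β..t, g s := by rw [hucu t ht]; exact hu t ht
      show uc t * (-(g t)) = u β * (-(g t)) + (∫ s in β..t, g s) * (-(g t))
      rw [h5]; ring
    rw [intervalIntegral.integral_congr hEqOn]
    have hi1 : IntervalIntegrable (fun t => u β * (-(g t))) volume β H := (hgi.neg).const_mul _
    have hi2 : IntervalIntegrable (fun t => (∫ s in β..t, g s) * (-(g t))) volume β H :=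
      (hgi.neg).continuousOn_mul hGc2
    rw [intervalIntegral.integral_add hi1 hi2]
    have e2 : (∫ t in β..H, g t) = - u β := by
      have h6 := hudiff β ⟨le_rfl, hβH'⟩ H ⟨hβH', le_rfl⟩ hβH'
      rw [huH] at h6; linarith
    have e1 : (∫ t in β..H, u β * (-(g t))) = u β * u β := by
      rw [intervalIntegral.integral_const_mul, intervalIntegral.integral_neg, e2]; ring
    have e3 : (∫ t in β..H, (∫ s in β..t, g s) * (-(g t)))
        = -((∫ t in β..H, g t) ^ 2 / 2) := by
      have h7 : (fun t => (∫ s in β..t, g s) * (-(g t)))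
          = fun t => -(g t * ∫ s in β..t, g s) := by funext t; ring
      rw [h7, intervalIntegral.integral_neg, sq_primitive hβH' hgi]
    rw [e1, e3, e2]
    have h8 : uc β = u β := hucu β ⟨le_rfl, hβH'⟩
    rw [h8]; ring
  rw [hEq] at hIneq
  rw [hPint] at hIneq
  have hI0 : 0 ≤ ∫ t in β..H, (t - β) * uc t ^ 2 :=
    intervalIntegral.integral_nonneg hβH' fun t ht => mul_nonneg (by linarith [ht.1]) (sq_nonneg _)
  have hgoalInt : (∫ σ in β..H, (σ - β) * u σ ^ 2) = ∫ t in β..H, (t - β) * uc t ^ 2 := by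
    apply intervalIntegral.integral_congr
    intro t ht
    rw [Set.uIcc_of_le hβH'] at ht
    show (t - β) * u t ^ 2 = (t - β) * uc t ^ 2
    rw [hucu t ht]
  rw [hgoalInt]
  have hub : u β = uc β := (hucu β ⟨le_rfl, hβH'⟩).symm
  rw [hub]
  have hdiv : cm / cM ≤ c₁ / cM := by gcongr
  calc 2 * (cm / cM) * ξ * (∫ t in β..H, (t - β) * uc t ^ 2)
      = cm / cM * (2 * ξ * ∫ t in β..H, (t - β) * uc t ^ 2) := by ring
    _ ≤ c₁ / cM * (2 * ξ * ∫ t in β..H, (t - β) * uc t ^ 2) :=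
        mul_le_mul_of_nonneg_right hdiv
          (mul_nonneg (mul_nonneg (by norm_num) hξpos.le) hI0)
    _ = 2 * (c₁ * ξ / cM * ∫ t in β..H, (t - β) * uc t ^ 2) := by ring
    _ ≤ uc β ^ 2 := by linarith
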